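/- arXiv:1401.4294 — 4 statements merged into one kernel-verified Lean document; each statement's English description precedes it below -/
import Mathlib

section
/- Let s, r ≥ 0 be integers, ν an integer with 1 ≤ ν ≤ s + r, h > 0, and x₀ ∈ ℝ, with nodes x₀ + jh for j = -s, …, r. Let α_{-s}, …, α_r be the unique real coefficients such that ∑_{j=-s}^{r} α_j · P(x₀ + jh) = h^ν · P^{(ν)}(x₀) for every polynomial P of degree at most s + r. Then there is a constant C, depending only on s, r and ν (not on h, x₀, or y), such that for every function y : ℝ → ℝ that is (s+r+1)-times continuously differentiable on [x₀ - sh, x₀ + rh] with |y^{(s+r+1)}(t)| ≤ M on that interval, one has |y^{(ν)}(x₀) - h^{-ν} ∑_{j=-s}^{r} α_j y(x₀ + jh)| ≤ C · M · h^{s+r+1-ν}. -/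
open Polynomial Finset Set


noncomputable def Tpoly (d : ℕ → ℝ) (x₀ : ℝ) (n : ℕ) : Polynomial ℝ :=
  ∑ k ∈ Finset.range (n+1), Polynomial.C (d k / k.factorial) * (X - Polynomial.C x₀)^k

lemma Tpoly_natDegree_le (d : ℕ → ℝ) (x₀ : ℝ) (n : ℕ) : (Tpoly d x₀ n).natDegree ≤ n := by
  refine (Polynomial.natDegree_sum_le _ _).trans ?_
  rw [Finset.fold_max_le]
  refine ⟨Nat.zero_le _, fun k hk => ?_⟩
  refine (Polynomial.natDegree_C_mul_le _ _).trans ?_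
  refine (Polynomial.natDegree_pow_le).trans ?_
  simp only [Polynomial.natDegree_X_sub_C, mul_one]
  exact Nat.lt_succ_iff.mp (Finset.mem_range.mp hk)

lemma Tpoly_eval (d : ℕ → ℝ) (x₀ : ℝ) (n : ℕ) (x : ℝ) :
    (Tpoly d x₀ n).eval x = ∑ k ∈ Finset.range (n+1), d k / k.factorial * (x - x₀)^k := by
  simp [Tpoly, Polynomial.eval_finset_sum]

lemma Tpoly_eval_self (d : ℕ → ℝ) (x₀ : ℝ) (n : ℕ) : (Tpoly d x₀ n).eval x₀ = d 0 := by
  rw [Tpoly_eval, Finset.sum_eq_single 0]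
  · simp
  · intro k _ hk; simp [sub_self, zero_pow hk]
  · simp

lemma Tpoly_derivative (d : ℕ → ℝ) (x₀ : ℝ) (n : ℕ) :
    Polynomial.derivative (Tpoly d x₀ (n+1)) = Tpoly (fun k => d (k+1)) x₀ n := by
  unfold Tpoly
  rw [map_sum, Finset.sum_range_succ']
  simp only [pow_zero, mul_one, Polynomial.derivative_C, add_zero]
  refine Finset.sum_congr rfl (fun k _ => ?_)
  rw [Polynomial.derivative_C_mul, Polynomial.derivative_pow, Polynomial.derivative_X_sub_C,
    mul_one, Nat.add_sub_cancel, ← mul_assoc, ← Polynomial.C_mul]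
  congr 1
  rw [Nat.factorial_succ]
  have : (k.factorial : ℝ) ≠ 0 := Nat.cast_ne_zero.mpr k.factorial_ne_zero
  congr 1
  push_cast
  field_simp

lemma Tpoly_iterate_derivative (x₀ : ℝ) (ν : ℕ) :
    ∀ n, ν ≤ n → ∀ d : ℕ → ℝ,
      Polynomial.derivative^[ν] (Tpoly d x₀ n) = Tpoly (fun k => d (k+ν)) x₀ (n-ν) := by
  induction ν with
  | zero => intro n _ d; simp
  | succ ν ih =>
    intro n hn d
    obtain ⟨m, rfl⟩ : ∃ m, n = m + 1 := ⟨n - 1, by omega⟩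
    rw [Function.iterate_succ_apply, Tpoly_derivative, ih m (by omega)]
    have h2 : m - ν = m + 1 - (ν + 1) := by omega
    rw [h2]
    rfl

lemma Tpoly_iterate_derivative_eval (d : ℕ → ℝ) (x₀ : ℝ) (ν n : ℕ) (h : ν ≤ n) :
    (Polynomial.derivative^[ν] (Tpoly d x₀ n)).eval x₀ = d ν := by
  rw [Tpoly_iterate_derivative x₀ ν n h d, Tpoly_eval_self]
  simp
lemma taylor_bd (M a b : ℝ) (hab : a < b) :
    ∀ n : ℕ, ∀ f : ℝ → ℝ, ContDiffOn ℝ (n+1) f (Set.Icc a b) →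
      (∀ t ∈ Set.Icc a b, |iteratedDerivWithin (n+1) f (Set.Icc a b) t| ≤ M) →
      ∀ x₀ ∈ Set.Icc a b, ∀ x ∈ Set.Icc a b,
        |f x - (Tpoly (fun k => iteratedDerivWithin k f (Set.Icc a b) x₀) x₀ n).eval x|
          ≤ M * (b-a)^(n+1) := by
  have uniq : UniqueDiffOn ℝ (Set.Icc a b) := uniqueDiffOn_Icc hab
  intro n
  induction n with
  | zero =>
    intro f hf hM x₀ hx₀ x hx
    have hM0 : 0 ≤ M := le_trans (abs_nonneg _) (hM x₀ hx₀)
    have heval : (Tpoly (fun k => iteratedDerivWithin k f (Set.Icc a b) x₀) x₀ 0).eval x = f x₀ := by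
      simp [Tpoly]
    rw [heval, pow_one]
    have hdiff : DifferentiableOn ℝ f (Set.Icc a b) :=
      hf.differentiableOn (by simp)
    have hb : ∀ t ∈ Set.Icc a b, ‖derivWithin f (Set.Icc a b) t‖ ≤ M := by
      intro t ht
      have := hM t ht
      rwa [iteratedDerivWithin_one] at this
    calc |f x - f x₀| ≤ M * ‖x - x₀‖ :=
          Convex.norm_image_sub_le_of_norm_derivWithin_le hdiff hb (convex_Icc a b) hx₀ hx
      _ ≤ M * (b - a) := by
          refine mul_le_mul_of_nonneg_left ?_ hM0
          rw [Real.norm_eq_abs, abs_le]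
          constructor <;> [linarith [hx.1, hx₀.2]; linarith [hx.2, hx₀.1]]
  | succ n ih =>
    intro f hf hM x₀ hx₀ x hx
    have hM0 : 0 ≤ M := le_trans (abs_nonneg _) (hM x₀ hx₀)
    set S := Set.Icc a b with hS
    set g := derivWithin f S with hg
    have hgc : ContDiffOn ℝ (n+1) g S := by
      refine hf.derivWithin uniq ?_
      exact_mod_cast Nat.le_refl (n+2)
    have hgb : ∀ t ∈ S, |iteratedDerivWithin (n+1) g S t| ≤ M := by
      intro t ht
      rw [← iteratedDerivWithin_succ']
      exact hM t ht
    have hdfun : (fun k => iteratedDerivWithin k g S x₀)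
        = (fun k => iteratedDerivWithin (k+1) f S x₀) := by
      funext k; exact (congrFun (iteratedDerivWithin_succ' (f := f) (s := S) (n := k)) x₀).symm
    have IH : ∀ t ∈ S, |g t -
        (Tpoly (fun k => iteratedDerivWithin (k+1) f S x₀) x₀ n).eval t| ≤ M * (b-a)^(n+1) := by
      intro t ht
      have := ih g hgc hgb x₀ hx₀ t ht
      rwa [hdfun] at this
    set d : ℕ → ℝ := fun k => iteratedDerivWithin k f S x₀ with hd
    set T : Polynomial ℝ := Tpoly d x₀ (n+1) with hT
    have hderivT : Polynomial.derivative T = Tpoly (fun k => d (k+1)) x₀ n := Tpoly_derivative d x₀ n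
    have hdiff : DifferentiableOn ℝ f S :=
      hf.differentiableOn (by simp)
    have hF : ∀ t ∈ S, HasDerivWithinAt (fun x => f x - T.eval x)
        (g t - (Tpoly (fun k => d (k+1)) x₀ n).eval t) S t := by
      intro t ht
      refine HasDerivWithinAt.sub ((hdiff t ht).hasDerivWithinAt) ?_
      rw [← hderivT]
      exact (T.hasDerivAt t).hasDerivWithinAt
    have hbd : ∀ t ∈ S, ‖g t - (Tpoly (fun k => d (k+1)) x₀ n).eval t‖ ≤ M * (b-a)^(n+1) := by
      intro t ht
      exact IH t ht
    have key := Convex.norm_image_sub_le_of_norm_hasDerivWithin_le hF hbd (convex_Icc a b) hx₀ hx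
    have hFx₀ : f x₀ - T.eval x₀ = 0 := by
      rw [hT, Tpoly_eval_self, hd]
      simp [iteratedDerivWithin_zero]
    rw [hFx₀, sub_zero] at key
    calc |f x - T.eval x| ≤ M * (b-a)^(n+1) * ‖x - x₀‖ := key
      _ ≤ M * (b-a)^(n+1) * (b-a) := by
          refine mul_le_mul_of_nonneg_left ?_ (mul_nonneg hM0 (pow_nonneg (by linarith : (0:ℝ) ≤ b - a) _))
          rw [Real.norm_eq_abs, abs_le]
          constructor <;> [linarith [hx.1, hx₀.2]; linarith [hx.2, hx₀.1]]
      _ = M * (b-a)^(n+2) := by ring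
lemma iterate_derivative_comp_linear (c x₀ : ℝ) (ν : ℕ) : ∀ p : Polynomial ℝ,
    Polynomial.derivative^[ν] (p.comp (Polynomial.C c * (X - Polynomial.C x₀)))
      = Polynomial.C (c^ν) * ((Polynomial.derivative^[ν] p).comp
          (Polynomial.C c * (X - Polynomial.C x₀))) := by
  induction ν with
  | zero => intro p; simp
  | succ ν ih =>
    intro p
    rw [Function.iterate_succ_apply, Polynomial.derivative_comp]
    have hq : Polynomial.derivative (Polynomial.C c * (X - Polynomial.C x₀)) = Polynomial.C c := by
      simp
    rw [hq, Polynomial.iterate_derivative_C_mul, ih (Polynomial.derivative p),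
      ← Function.iterate_succ_apply, ← mul_assoc, ← Polynomial.C_mul]
    congr 1
    rw [pow_succ]
    ring

lemma alpha_eq (s r ν : ℕ) (h : ℝ) (hh : h ≠ 0) (x₀ : ℝ) (α : ℤ → ℝ)
    (hE : ∀ P : Polynomial ℝ, P.natDegree ≤ s + r →
        ∑ j ∈ Finset.Icc (-(s : ℤ)) (r : ℤ), α j * P.eval (x₀ + (j : ℝ) * h) =
          h ^ ν * (Polynomial.derivative^[ν] P).eval x₀)
    (j : ℤ) (hj : j ∈ Finset.Icc (-(s : ℤ)) (r : ℤ)) :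
    α j = (Polynomial.derivative^[ν]
        (Lagrange.basis (Finset.Icc (-(s : ℤ)) (r : ℤ)) (fun i : ℤ => (i : ℝ)) j)).eval 0 := by
  set v : ℤ → ℝ := fun i => (i : ℝ) with hv
  set I := Finset.Icc (-(s : ℤ)) (r : ℤ) with hI
  have hvI : Set.InjOn v I := fun a _ b _ hab => Int.cast_injective hab
  set ℓ : Polynomial ℝ := Lagrange.basis I v j with hℓ
  have hcard : I.card = s + r + 1 := by
    rw [hI, Int.card_Icc]
    omega
  have hdegℓ : ℓ.natDegree = s + r := by
    rw [hℓ, Lagrange.natDegree_basis hvI hj, hcard]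
    omega
  set q : Polynomial ℝ := Polynomial.C (1/h) * (X - Polynomial.C x₀) with hq
  have hdegq : q.natDegree = 1 := by
    rw [hq, Polynomial.natDegree_C_mul (by simpa using hh), Polynomial.natDegree_X_sub_C]
  have hdegP : (ℓ.comp q).natDegree ≤ s + r := by
    rw [Polynomial.natDegree_comp, hdegℓ, hdegq, mul_one]
  have hqeval : ∀ k : ℤ, q.eval (x₀ + (k : ℝ) * h) = (k : ℝ) := by
    intro k
    rw [hq]
    simp only [Polynomial.eval_mul, Polynomial.eval_C, Polynomial.eval_sub, Polynomial.eval_X]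
    field_simp
    ring
  have := hE (ℓ.comp q) hdegP
  have hLHS : ∑ k ∈ I, α k * (ℓ.comp q).eval (x₀ + (k : ℝ) * h) = α j := by
    rw [Finset.sum_eq_single j]
    · rw [Polynomial.eval_comp, hqeval j]
      have : ℓ.eval (v j) = 1 := Lagrange.eval_basis_self hvI hj
      rw [hv] at this
      simp only at this
      rw [this, mul_one]
    · intro k hk hkj
      rw [Polynomial.eval_comp, hqeval k]
      have : ℓ.eval (v k) = 0 := Lagrange.eval_basis_of_ne (Ne.symm hkj) hk
      rw [hv] at this
      simp only at this
      rw [this, mul_zero]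
    · intro hjn; exact absurd hj hjn
  rw [hLHS] at this
  rw [this, iterate_derivative_comp_linear, Polynomial.eval_mul, Polynomial.eval_C,
    Polynomial.eval_comp]
  have h0 : q.eval x₀ = 0 := by rw [hq]; simp
  rw [h0, ← mul_assoc]
  rw [div_pow, one_pow]
  rw [mul_one_div, div_self (pow_ne_zero _ hh), one_mul]

/-- Error bound of order `p = s + r + 1 - ν` for the `(s+r)`-step finite
difference formula on a uniform grid: if the coefficients `α` are exact on
polynomials of degree at most `s+r` (i.e. `∑ⱼ αⱼ P(x₀+jh) = hᵛ P⁽ᵛ⁾(x₀)`),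
then there is a constant `C = C(s,r,ν)` such that for every `C^{s+r+1}`
function `y` on `[x₀-sh, x₀+rh]` whose `(s+r+1)`-st derivative is bounded by
`M` there,
`|y⁽ᵛ⁾(x₀) - h^{-ν} ∑ⱼ αⱼ y(x₀+jh)| ≤ C M h^{s+r+1-ν}`. -/
theorem stmt_1 (s r ν : ℕ) (hν1 : 1 ≤ ν) (hν2 : ν ≤ s + r) :
    ∃ C : ℝ, ∀ h : ℝ, 0 < h → ∀ (x₀ : ℝ) (α : ℤ → ℝ),
      (∀ P : Polynomial ℝ, P.natDegree ≤ s + r →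
        ∑ j ∈ Finset.Icc (-(s : ℤ)) (r : ℤ), α j * P.eval (x₀ + (j : ℝ) * h) =
          h ^ ν * (Polynomial.derivative^[ν] P).eval x₀) →
      ∀ (y : ℝ → ℝ) (M : ℝ),
        ContDiffOn ℝ (s + r + 1) y (Set.Icc (x₀ - s * h) (x₀ + r * h)) →
        (∀ t ∈ Set.Icc (x₀ - s * h) (x₀ + r * h),
          |iteratedDerivWithin (s + r + 1) y (Set.Icc (x₀ - s * h) (x₀ + r * h)) t| ≤ M) →
        |iteratedDerivWithin ν y (Set.Icc (x₀ - s * h) (x₀ + r * h)) x₀ -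
            (∑ j ∈ Finset.Icc (-(s : ℤ)) (r : ℤ), α j * y (x₀ + (j : ℝ) * h)) / h ^ ν| ≤
          C * M * h ^ (s + r + 1 - ν) := by
  classical
  set I := Finset.Icc (-(s : ℤ)) (r : ℤ) with hIdef
  set β : ℤ → ℝ := fun j =>
    (Polynomial.derivative^[ν] (Lagrange.basis I (fun i : ℤ => (i : ℝ)) j)).eval 0 with hβ
  set A : ℝ := ∑ j ∈ I, |β j| with hA
  refine ⟨A * (s + r : ℝ) ^ (s + r + 1), ?_⟩
  intro h hh x₀ α hE y M hy hM
  set a := x₀ - (s : ℝ) * h with ha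
  set b := x₀ + (r : ℝ) * h with hb
  have hsr : 1 ≤ s + r := le_trans hν1 hν2
  have hsrR : (1 : ℝ) ≤ (s : ℝ) + (r : ℝ) := by exact_mod_cast hsr
  have hab : a < b := by
    rw [ha, hb]
    nlinarith
  set S := Set.Icc a b with hS
  have hx₀S : x₀ ∈ S := by
    constructor
    · rw [ha]; nlinarith [Nat.cast_nonneg (α := ℝ) s]
    · rw [hb]; nlinarith [Nat.cast_nonneg (α := ℝ) r]
  have hM0 : 0 ≤ M := le_trans (abs_nonneg _) (hM x₀ hx₀S)
  set d : ℕ → ℝ := fun k => iteratedDerivWithin k y S x₀ with hd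
  set T := Tpoly d x₀ (s + r) with hT
  have hα : ∀ j ∈ I, α j = β j := fun j hj => alpha_eq s r ν h hh.ne' x₀ α hE j hj
  have hTν : (Polynomial.derivative^[ν] T).eval x₀ = d ν :=
    Tpoly_iterate_derivative_eval d x₀ ν (s + r) hν2
  have hex : ∑ j ∈ I, α j * T.eval (x₀ + (j : ℝ) * h) = h ^ ν * d ν := by
    rw [hE T (Tpoly_natDegree_le d x₀ (s + r)), hTν]
  have hnode : ∀ j ∈ I, x₀ + (j : ℝ) * h ∈ S := by
    intro j hj
    rw [hIdef, Finset.mem_Icc] at hj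
    have h1 : (-(s : ℝ)) ≤ (j : ℝ) := by exact_mod_cast hj.1
    have h2 : (j : ℝ) ≤ (r : ℝ) := by exact_mod_cast hj.2
    constructor
    · rw [ha]; nlinarith
    · rw [hb]; nlinarith
  have hy' : ContDiffOn ℝ ((s + r : ℕ) + 1) y S := by exact_mod_cast hy
  have htb := taylor_bd M a b hab (s + r) y hy' hM x₀ hx₀S
  have hpν : (0 : ℝ) < h ^ ν := pow_pos hh ν
  have key : iteratedDerivWithin ν y S x₀ -
      (∑ j ∈ I, α j * y (x₀ + (j : ℝ) * h)) / h ^ ν =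
      (∑ j ∈ I, α j * (T.eval (x₀ + (j : ℝ) * h) - y (x₀ + (j : ℝ) * h))) / h ^ ν := by
    have : ∑ j ∈ I, α j * (T.eval (x₀ + (j : ℝ) * h) - y (x₀ + (j : ℝ) * h)) =
        h ^ ν * d ν - ∑ j ∈ I, α j * y (x₀ + (j : ℝ) * h) := by
      rw [← hex, ← Finset.sum_sub_distrib]
      exact Finset.sum_congr rfl fun j _ => by ring
    rw [this]
    have hdν : iteratedDerivWithin ν y S x₀ = d ν := rfl
    rw [hdν]
    field_simp
    ring
  rw [key, abs_div, abs_of_pos hpν]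
  rw [div_le_iff₀ hpν]
  have hbound : |∑ j ∈ I, α j * (T.eval (x₀ + (j : ℝ) * h) - y (x₀ + (j : ℝ) * h))| ≤
      A * (M * (b - a) ^ (s + r + 1)) := by
    refine (Finset.abs_sum_le_sum_abs _ _).trans ?_
    rw [hA, Finset.sum_mul]
    refine Finset.sum_le_sum fun j hj => ?_
    rw [abs_mul, hα j hj]
    refine mul_le_mul_of_nonneg_left ?_ (abs_nonneg _)
    rw [abs_sub_comm]
    exact htb _ (hnode j hj)
  refine hbound.trans (le_of_eq ?_)
  have hba : b - a = ((s : ℝ) + r) * h := by rw [ha, hb]; ring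
  have hpow : h ^ ν * h ^ (s + r + 1 - ν) = h ^ (s + r + 1) := by
    rw [← pow_add]; congr 1; omega
  rw [hba, mul_pow, ← hpow]
  ring
end

section
/- Let a < b be real numbers and q : ℝ → ℝ continuous on [a, b]. Suppose λ ∈ ℂ and y : ℝ → ℂ is twice continuously differentiable on [a, b], is not identically zero on [a, b], and satisfies -y''(x) + q(x) y(x) = λ y(x) for all x ∈ [a, b] together with the Dirichlet boundary conditions y(a) = y(b) = 0. Then λ is real. -/
open Set MeasureTheory intervalIntegral

/-- Eigenvalues of the Dirichlet Sturm-Liouville problem `-y'' + q y = λ y`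
on `[a, b]` are real: if `y : ℝ → ℂ` is twice continuously differentiable on
`[a, b]`, not identically zero there, solves the equation with parameter
`λ ∈ ℂ`, and satisfies `y(a) = y(b) = 0`, then `λ` is real. -/
theorem stmt_4 (a b : ℝ) (hab : a < b) (q : ℝ → ℝ)
    (hq : ContinuousOn q (Set.Icc a b)) (lam : ℂ) (y : ℝ → ℂ)
    (hy : ContDiffOn ℝ 2 y (Set.Icc a b))
    (hy0 : ∃ x ∈ Set.Icc a b, y x ≠ 0)
    (heq : ∀ x ∈ Set.Icc a b,
      -(iteratedDerivWithin 2 y (Set.Icc a b) x) + (q x : ℂ) * y x = lam * y x)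
    (hya : y a = 0) (hyb : y b = 0) :
    lam.im = 0 := by
  set s : Set ℝ := Set.Icc a b with hs_def
  have hsu : UniqueDiffOn ℝ s := uniqueDiffOn_Icc hab
  set y1 : ℝ → ℂ := derivWithin y s with hy1_def
  set y2 : ℝ → ℂ := iteratedDerivWithin 2 y s with hy2_def
  -- y2 = (q - λ) y on s
  have hy2eq : ∀ x ∈ s, y2 x = ((q x : ℂ) - lam) * y x := by
    intro x hx
    have := heq x hx
    have : y2 x = (q x : ℂ) * y x - lam * y x := by
      rw [hy2_def]; linear_combination -this
    rw [this]; ring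
  -- regularity of y1
  have hy1cd : ContDiffOn ℝ 1 y1 s := hy.derivWithin hsu (by norm_num)
  have hy1diff : DifferentiableOn ℝ y1 s := hy1cd.differentiableOn (by norm_num)
  have hydiff : DifferentiableOn ℝ y s := hy.differentiableOn (by norm_num)
  have hy1d : ∀ x ∈ s, HasDerivWithinAt y (y1 x) s x := fun x hx =>
    (hydiff x hx).hasDerivWithinAt
  have hy2d : ∀ x ∈ s, HasDerivWithinAt y1 (y2 x) s x := by
    intro x hx
    have h1 : y2 x = derivWithin y1 s x := by
      rw [hy2_def, iteratedDerivWithin_succ]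
      exact derivWithin_congr (fun t ht => congrFun iteratedDerivWithin_one t)
        (congrFun iteratedDerivWithin_one x)
    rw [h1]
    exact (hy1diff x hx).hasDerivWithinAt
  -- the Wronskian-type function
  set g : ℝ → ℂ := fun x => y1 x * (starRingEnd ℂ) (y x) - (starRingEnd ℂ) (y1 x) * y x
    with hg_def
  set g' : ℝ → ℂ := fun x => ((starRingEnd ℂ) lam - lam) * (y x * (starRingEnd ℂ) (y x))
    with hg'_def
  have hgderiv : ∀ x ∈ s, HasDerivWithinAt g (g' x) s x := by
    intro x hx
    have h1 := ((hy2d x hx).mul ((hy1d x hx).star)).sub (((hy2d x hx).star).mul (hy1d x hx))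
    convert h1 using 1
    · rfl
    · rfl
    rw [hg'_def]
    simp only [hy2eq x hx, Complex.star_def, map_mul, map_sub, map_add, map_neg,
      Complex.conj_ofReal]
    ring
  -- continuity of everything
  have hycont : ContinuousOn y s := hy.continuousOn
  have hy1cont : ContinuousOn y1 s := hy1cd.continuousOn
  have hgcont : ContinuousOn g s := by
    apply ContinuousOn.sub
    · exact hy1cont.mul (Complex.continuous_conj.comp_continuousOn hycont)
    · exact (Complex.continuous_conj.comp_continuousOn hy1cont).mul hycont
  have hg'cont : ContinuousOn g' s := by
    apply ContinuousOn.mul continuousOn_const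
    exact hycont.mul (Complex.continuous_conj.comp_continuousOn hycont)
  have hg'int : IntervalIntegrable g' volume a b :=
    (hg'cont.mono (by rw [Set.uIcc_of_le hab.le])).intervalIntegrable
  -- FTC
  have hftc : ∫ x in a..b, g' x = g b - g a := by
    apply intervalIntegral.integral_eq_sub_of_hasDeriv_right_of_le hab.le hgcont _ hg'int
    intro x hx
    have hxs : x ∈ s := Set.Ioo_subset_Icc_self hx
    have hnb : s ∈ nhds x := Icc_mem_nhds hx.1 hx.2
    exact ((hgderiv x hxs).hasDerivAt hnb).hasDerivWithinAt
  have hga : g a = 0 := by simp [hg_def, hya]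
  have hgb : g b = 0 := by simp [hg_def, hyb]
  rw [hga, hgb, sub_zero] at hftc
  -- pull out the constant
  have hsplit : ((starRingEnd ℂ) lam - lam) * ∫ x in a..b, y x * (starRingEnd ℂ) (y x) = 0 := by
    rw [← intervalIntegral.integral_const_mul]; exact hftc
  -- the integral is a positive real
  have hmc : ∀ x, y x * (starRingEnd ℂ) (y x) = ((Complex.normSq (y x) : ℝ) : ℂ) := by
    intro x; rw [Complex.mul_conj]
  have hint_eq : (∫ x in a..b, y x * (starRingEnd ℂ) (y x))
      = ((∫ x in a..b, Complex.normSq (y x) : ℝ) : ℂ) := by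
    simp_rw [hmc]
    exact intervalIntegral.integral_ofReal
  have hnscont : ContinuousOn (fun x => Complex.normSq (y x)) s :=
    Complex.continuous_normSq.comp_continuousOn hycont
  have hnsint : IntervalIntegrable (fun x => Complex.normSq (y x)) volume a b :=
    (hnscont.mono (by rw [Set.uIcc_of_le hab.le])).intervalIntegrable
  have hpos : 0 < ∫ x in a..b, Complex.normSq (y x) := by
    rw [intervalIntegral.integral_pos_iff_support_of_nonneg_ae
      (Filter.Eventually.of_forall fun x => Complex.normSq_nonneg _) hnsint]
    refine ⟨hab, ?_⟩
    obtain ⟨x0, hx0, hx0ne⟩ := hy0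
    have hx0oo : x0 ∈ Set.Ioo a b := by
      rcases hx0.1.lt_or_eq with h | h
      · rcases hx0.2.lt_or_eq with h' | h'
        · exact ⟨h, h'⟩
        · exact absurd (h' ▸ hyb) hx0ne
      · exact absurd (h ▸ hya) hx0ne
    have hca : ContinuousAt (fun x => Complex.normSq (y x)) x0 :=
      hnscont.continuousAt (Icc_mem_nhds hx0oo.1 hx0oo.2)
    have hvpos : 0 < Complex.normSq (y x0) := Complex.normSq_pos.mpr hx0ne
    have hev : ∀ᶠ t in nhds x0, 0 < Complex.normSq (y t) :=
      hca.eventually (eventually_gt_nhds hvpos)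
    have hev2 : {t | 0 < Complex.normSq (y t)} ∩ Set.Ioo a b ∈ nhds x0 :=
      Filter.inter_mem hev (isOpen_Ioo.mem_nhds hx0oo)
    obtain ⟨U, hUsub, hUopen, hx0U⟩ := mem_nhds_iff.mp hev2
    refine lt_of_lt_of_le (hUopen.measure_pos volume ⟨x0, hx0U⟩) (measure_mono ?_)
    intro t ht
    obtain ⟨h1, h2⟩ := hUsub ht
    exact ⟨h1.ne', ⟨h2.1, h2.2.le⟩⟩
  rw [hint_eq] at hsplit
  have hconj : (starRingEnd ℂ) lam - lam = 0 := by
    rcases mul_eq_zero.mp hsplit with h | h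
    · exact h
    · exact absurd h (by exact_mod_cast hpos.ne')
  have := congrArg Complex.im hconj
  simp [Complex.sub_im, Complex.conj_im] at this
  linarith
end

section
/- Let a < b be real numbers and q : ℝ → ℝ continuous on [a, b]. Suppose λ, μ ∈ ℝ with λ ≠ μ, and y, z : ℝ → ℝ are twice continuously differentiable on [a, b], satisfy -y''(x) + q(x) y(x) = λ y(x) and -z''(x) + q(x) z(x) = μ z(x) for all x ∈ [a, b], and satisfy y(a) = y(b) = 0 and z(a) = z(b) = 0. Then ∫_a^b y(x) z(x) dx = 0. -/
/-- Orthogonality of eigenfunctions of the Dirichlet Sturm-Liouville problem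
`-u'' + q u = λ u` on `[a, b]` associated to distinct eigenvalues:
`∫_a^b y z = 0`. -/
theorem stmt_5 (a b : ℝ) (hab : a < b) (q : ℝ → ℝ)
    (hq : ContinuousOn q (Set.Icc a b)) (lam mu : ℝ) (hne : lam ≠ mu)
    (y z : ℝ → ℝ)
    (hy : ContDiffOn ℝ 2 y (Set.Icc a b))
    (hz : ContDiffOn ℝ 2 z (Set.Icc a b))
    (heqy : ∀ x ∈ Set.Icc a b,
      -(iteratedDerivWithin 2 y (Set.Icc a b) x) + q x * y x = lam * y x)
    (heqz : ∀ x ∈ Set.Icc a b,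
      -(iteratedDerivWithin 2 z (Set.Icc a b) x) + q x * z x = mu * z x)
    (hya : y a = 0) (hyb : y b = 0) (hza : z a = 0) (hzb : z b = 0) :
    ∫ x in a..b, y x * z x = 0 := by
  set S := Set.Icc a b with hS
  have hud : UniqueDiffOn ℝ S := uniqueDiffOn_Icc hab
  -- first derivatives
  set y1 := derivWithin y S with hy1
  set z1 := derivWithin z S with hz1
  have hy1c : ContDiffOn ℝ 1 y1 S := hy.derivWithin hud (by norm_num)
  have hz1c : ContDiffOn ℝ 1 z1 S := hz.derivWithin hud (by norm_num)
  -- second derivatives equal iterated deriv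
  have hiter : ∀ (f : ℝ → ℝ), ∀ x ∈ S, iteratedDerivWithin 2 f S x
      = derivWithin (derivWithin f S) S x := by
    intro f x hx
    rw [iteratedDerivWithin_succ]
    refine derivWithin_congr (fun t ht => congrFun iteratedDerivWithin_one t)
      (congrFun iteratedDerivWithin_one x)
  -- Wronskian-type function
  set W : ℝ → ℝ := fun x => y1 x * z x - y x * z1 x with hW
  have hWc : ContinuousOn W S := by
    exact ((hy1c.continuousOn.mul hz.continuousOn).sub
      (hy.continuousOn.mul hz1c.continuousOn))
  set w : ℝ → ℝ := fun x => (mu - lam) * (y x * z x) with hw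
  have hderiv : ∀ x ∈ S, HasDerivWithinAt W (w x) S x := by
    intro x hx
    have hyx : HasDerivWithinAt y (y1 x) S x :=
      ((hy.differentiableOn (by norm_num) x hx).hasDerivWithinAt)
    have hzx : HasDerivWithinAt z (z1 x) S x :=
      ((hz.differentiableOn (by norm_num) x hx).hasDerivWithinAt)
    have hy1x : HasDerivWithinAt y1 (derivWithin y1 S x) S x :=
      ((hy1c.differentiableOn (by norm_num) x hx).hasDerivWithinAt)
    have hz1x : HasDerivWithinAt z1 (derivWithin z1 S x) S x :=
      ((hz1c.differentiableOn (by norm_num) x hx).hasDerivWithinAt)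
    have h := (hy1x.mul hzx).sub (hyx.mul hz1x)
    have hy2 : derivWithin y1 S x = q x * y x - lam * y x := by
      have := heqy x hx; rw [hiter y x hx] at this; linarith
    have hz2 : derivWithin z1 S x = q x * z x - mu * z x := by
      have := heqz x hx; rw [hiter z x hx] at this; linarith
    refine h.congr_deriv ?_
    simp only [hy2, hz2, hw]; ring
  have hwint : IntervalIntegrable w MeasureTheory.volume a b := by
    apply ContinuousOn.intervalIntegrable
    rw [Set.uIcc_of_le hab.le]
    exact (continuousOn_const.mul (hy.continuousOn.mul hz.continuousOn))
  have hftc : ∫ x in a..b, w x = W b - W a := by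
    refine intervalIntegral.integral_eq_sub_of_hasDeriv_right_of_le hab.le hWc
      (fun x hx => ?_) hwint
    have hx' : x ∈ S := Set.mem_Icc.mpr ⟨hx.1.le, hx.2.le⟩
    exact ((hderiv x hx').hasDerivAt (Icc_mem_nhds hx.1 hx.2)).hasDerivWithinAt
  have hWa : W a = 0 := by simp [hW, hya, hza]
  have hWb : W b = 0 := by simp [hW, hyb, hzb]
  have : (mu - lam) * ∫ x in a..b, y x * z x = 0 := by
    rw [← intervalIntegral.integral_const_mul]
    simpa [hw, hWa, hWb] using hftc
  have hml : mu - lam ≠ 0 := sub_ne_zero.mpr (Ne.symm hne)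
  exact (mul_eq_zero.mp this).resolve_left hml
end

section
/- Let a < b be real numbers, q : ℝ → ℝ continuous on [a, b], and λ < μ real numbers. Suppose y : ℝ → ℝ is twice continuously differentiable on [a, b], satisfies -y''(x) + q(x) y(x) = λ y(x) for all x ∈ [a, b], y(a) = y(b) = 0, and y(x) ≠ 0 for all x ∈ (a, b). Suppose z : ℝ → ℝ is twice continuously differentiable on [a, b], not identically zero on [a, b], and satisfies -z''(x) + q(x) z(x) = μ z(x) for all x ∈ [a, b]. Then z has a zero in the open interval (a, b). -/
open Set Topology

lemma sign_const {a b : ℝ} (hab : a < b) {f : ℝ → ℝ} (hf : ContinuousOn f (Icc a b))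
    (h : ∀ x ∈ Ioo a b, f x ≠ 0) :
    (∀ x ∈ Ioo a b, 0 < f x) ∨ (∀ x ∈ Ioo a b, f x < 0) := by
  have hx0 : (a + b) / 2 ∈ Ioo a b := ⟨by linarith, by linarith⟩
  have key : ∀ x ∈ Ioo a b, ∀ x' ∈ Ioo a b, f x < 0 → 0 < f x' → False := by
    intro x hx x' hx' hfx hfx'
    have hsub : uIcc x x' ⊆ Ioo a b := (Set.ordConnected_Ioo).uIcc_subset hx hx'
    have := intermediate_value_uIcc (hf.mono (hsub.trans Ioo_subset_Icc_self))
    have h0 : (0:ℝ) ∈ uIcc (f x) (f x') := by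
      rw [Set.mem_uIcc]; left; exact ⟨hfx.le, hfx'.le⟩
    obtain ⟨c, hc, hfc⟩ := this h0
    exact h c (hsub hc) hfc
  rcases (h _ hx0).lt_or_gt with h0 | h0
  · right; intro x hx
    rcases (h x hx).lt_or_gt with h1 | h1
    · exact h1
    · exact absurd (key _ hx0 _ hx h0 h1) (by simp)
  · left; intro x hx
    rcases (h x hx).lt_or_gt with h1 | h1
    · exact absurd (key _ hx _ hx0 h1 h0) (by simp)
    · exact h1

lemma sturm_key (a b : ℝ) (hab : a < b) (lam mu : ℝ) (hlm : lam < mu)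
    (q y z : ℝ → ℝ)
    (hy : ContDiffOn ℝ 2 y (Icc a b))
    (heqy : ∀ x ∈ Icc a b, iteratedDerivWithin 2 y (Icc a b) x = (q x - lam) * y x)
    (hya : y a = 0) (hyb : y b = 0)
    (hypos : ∀ x ∈ Ioo a b, 0 < y x)
    (hz : ContDiffOn ℝ 2 z (Icc a b))
    (heqz : ∀ x ∈ Icc a b, iteratedDerivWithin 2 z (Icc a b) x = (q x - mu) * z x)
    (hzpos : ∀ x ∈ Ioo a b, 0 < z x) : False := by
  set s := Icc a b with hsdef
  have hsu : UniqueDiffOn ℝ s := uniqueDiffOn_Icc hab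
  have has : a ∈ s := left_mem_Icc.2 hab.le
  have hbs : b ∈ s := right_mem_Icc.2 hab.le
  set y1 := derivWithin y s with hy1def
  set z1 := derivWithin z s with hz1def
  have hy1c : ContDiffOn ℝ 1 y1 s := hy.derivWithin hsu (by norm_num)
  have hz1c : ContDiffOn ℝ 1 z1 s := hz.derivWithin hsu (by norm_num)
  have hyd : ∀ x ∈ s, HasDerivWithinAt y (y1 x) s x := fun x hx =>
    ((hy.differentiableOn (by norm_num)) x hx).hasDerivWithinAt
  have hzd : ∀ x ∈ s, HasDerivWithinAt z (z1 x) s x := fun x hx =>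
    ((hz.differentiableOn (by norm_num)) x hx).hasDerivWithinAt
  have second : ∀ (f : ℝ → ℝ), ContDiffOn ℝ 1 (derivWithin f s) s →
      ∀ x ∈ s, HasDerivWithinAt (derivWithin f s) (iteratedDerivWithin 2 f s x) s x := by
    intro f hf1 x hx
    have h2 : iteratedDerivWithin 2 f s x = derivWithin (derivWithin f s) s x := by
      rw [iteratedDerivWithin_succ]
      exact derivWithin_congr (fun t ht => congrFun iteratedDerivWithin_one t)
        (congrFun iteratedDerivWithin_one x)
    rw [h2]
    exact ((hf1.differentiableOn one_ne_zero) x hx).hasDerivWithinAt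
  have hy1d := second y hy1c
  have hz1d := second z hz1c
  set W : ℝ → ℝ := fun x => y x * z1 x - y1 x * z x with hWdef
  have Wcont : ContinuousOn W s :=
    (hy.continuousOn.mul hz1c.continuousOn).sub (hy1c.continuousOn.mul hz.continuousOn)
  have Wderiv : ∀ x ∈ s, HasDerivWithinAt W ((lam - mu) * (y x * z x)) s x := by
    intro x hx
    have h1 := ((hyd x hx).mul (hz1d x hx)).sub ((hy1d x hx).mul (hzd x hx))
    refine h1.congr_deriv ?_
    rw [heqy x hx, heqz x hx]; ring
  have hWanti : StrictAntiOn W s := by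
    apply strictAntiOn_of_deriv_neg (convex_Icc a b) Wcont
    intro x hx
    rw [interior_Icc] at hx
    have hd := (Wderiv x (Ioo_subset_Icc_self hx)).hasDerivAt (Icc_mem_nhds hx.1 hx.2)
    rw [hd.deriv]
    have := mul_pos (hypos x hx) (hzpos x hx)
    nlinarith
  have hne : ∀ c ∈ s, (𝓝[Ioo a b] c).NeBot := by
    intro c hc
    rw [← mem_closure_iff_nhdsWithin_neBot, closure_Ioo hab.ne]
    exact hc
  have hza : 0 ≤ z a := by
    haveI := hne a has
    have ht : Filter.Tendsto z (𝓝[Ioo a b] a) (𝓝 (z a)) :=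
      ((hz.continuousOn a has).mono Ioo_subset_Icc_self)
    exact ge_of_tendsto ht (Filter.eventually_of_mem self_mem_nhdsWithin
      (fun t ht => (hzpos t ht).le))
  have hzb : 0 ≤ z b := by
    haveI := hne b hbs
    have ht : Filter.Tendsto z (𝓝[Ioo a b] b) (𝓝 (z b)) :=
      ((hz.continuousOn b hbs).mono Ioo_subset_Icc_self)
    exact ge_of_tendsto ht (Filter.eventually_of_mem self_mem_nhdsWithin
      (fun t ht => (hzpos t ht).le))
  have hdiffa : Ioo a b \ {a} = Ioo a b := Set.diff_singleton_eq_self (by simp)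
  have hdiffb : Ioo a b \ {b} = Ioo a b := Set.diff_singleton_eq_self (by simp)
  have hy1a : 0 ≤ y1 a := by
    haveI := hne a has
    have hs := (hyd a has).mono Ioo_subset_Icc_self
    rw [hasDerivWithinAt_iff_tendsto_slope, hdiffa] at hs
    refine ge_of_tendsto hs (Filter.eventually_of_mem self_mem_nhdsWithin (fun t ht => ?_))
    rw [slope_def_field, hya, sub_zero]
    exact div_nonneg (hypos t ht).le (by linarith [ht.1])
  have hy1b : y1 b ≤ 0 := by
    haveI := hne b hbs
    have hs := (hyd b hbs).mono Ioo_subset_Icc_self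
    rw [hasDerivWithinAt_iff_tendsto_slope, hdiffb] at hs
    refine le_of_tendsto hs (Filter.eventually_of_mem self_mem_nhdsWithin (fun t ht => ?_))
    rw [slope_def_field, hyb, sub_zero]
    exact div_nonpos_of_nonneg_of_nonpos (hypos t ht).le (by linarith [ht.2])
  have hlt : W b < W a := hWanti has hbs hab
  have hWa : W a = -(y1 a * z a) := by simp [hWdef, hya]
  have hWb : W b = -(y1 b * z b) := by simp [hWdef, hyb]
  nlinarith [mul_nonneg hy1a hza, mul_nonpos_of_nonpos_of_nonneg hy1b hzb]

/-- Sturm comparison theorem for `-u'' + q u = λ u`: if `y` is a solution for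
the parameter `λ` that vanishes at `a` and `b` but not inside `(a, b)`, then
every solution `z` (not identically zero) for a larger parameter `μ > λ` must
vanish somewhere in `(a, b)`. -/
theorem stmt_7 (a b : ℝ) (hab : a < b) (q : ℝ → ℝ)
    (hq : ContinuousOn q (Set.Icc a b)) (lam mu : ℝ) (hlm : lam < mu)
    (y z : ℝ → ℝ)
    (hy : ContDiffOn ℝ 2 y (Set.Icc a b))
    (heqy : ∀ x ∈ Set.Icc a b,
      -(iteratedDerivWithin 2 y (Set.Icc a b) x) + q x * y x = lam * y x)
    (hya : y a = 0) (hyb : y b = 0)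
    (hynz : ∀ x ∈ Set.Ioo a b, y x ≠ 0)
    (hz : ContDiffOn ℝ 2 z (Set.Icc a b))
    (hz0 : ∃ x ∈ Set.Icc a b, z x ≠ 0)
    (heqz : ∀ x ∈ Set.Icc a b,
      -(iteratedDerivWithin 2 z (Set.Icc a b) x) + q x * z x = mu * z x) :
    ∃ x ∈ Set.Ioo a b, z x = 0 := by
  by_contra hcon
  push_neg at hcon
  have hsu : UniqueDiffOn ℝ (Icc a b) := uniqueDiffOn_Icc hab
  have heqy' : ∀ x ∈ Icc a b,
      iteratedDerivWithin 2 y (Icc a b) x = (q x - lam) * y x := by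
    intro x hx; have := heqy x hx; ring_nf; ring_nf at this ⊢; linarith
  have heqz' : ∀ x ∈ Icc a b,
      iteratedDerivWithin 2 z (Icc a b) x = (q x - mu) * z x := by
    intro x hx; have := heqz x hx; ring_nf; ring_nf at this ⊢; linarith
  have heqny : ∀ x ∈ Icc a b,
      iteratedDerivWithin 2 (-y) (Icc a b) x = (q x - lam) * (-y) x := by
    intro x hx
    rw [iteratedDerivWithin_neg, heqy' x hx]; simp
  have heqnz : ∀ x ∈ Icc a b,
      iteratedDerivWithin 2 (-z) (Icc a b) x = (q x - mu) * (-z) x := by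
    intro x hx
    rw [iteratedDerivWithin_neg, heqz' x hx]; simp
  rcases sign_const hab hy.continuousOn hynz with hyp | hyn <;>
  rcases sign_const hab hz.continuousOn hcon with hzp | hzn
  · exact sturm_key a b hab lam mu hlm q y z hy heqy' hya hyb hyp hz heqz' hzp
  · exact sturm_key a b hab lam mu hlm q y (-z) hy heqy' hya hyb hyp hz.neg heqnz
      (fun x hx => by simpa using (hzn x hx))
  · exact sturm_key a b hab lam mu hlm q (-y) z hy.neg heqny (by simp [hya]) (by simp [hyb])
      (fun x hx => by simpa using (hyn x hx)) hz heqz' hzp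
  · exact sturm_key a b hab lam mu hlm q (-y) (-z) hy.neg heqny (by simp [hya]) (by simp [hyb])
      (fun x hx => by simpa using (hyn x hx)) hz.neg heqnz
      (fun x hx => by simpa using (hzn x hx))
end
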